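/- arXiv:1412.8137 — 3 statements merged into one kernel-verified Lean document; each statement's English description precedes it below -/
import Mathlib

section
/- The Petersen graph is not determined by its energy among 3-regular graphs on 10 vertices: there exists a 3-regular simple graph on 10 vertices that is not isomorphic to the Petersen graph and whose energy equals 16. -/
open scoped Classical

/-- The energy of a real matrix: the sum of the absolute values of its eigenvalues
(with multiplicity), when the matrix is Hermitian (= symmetric). -/
noncomputable def matrixEnergy {n : Type*} [Fintype n] (A : Matrix n n ℝ) : ℝ :=
  if h : A.IsHermitian then ∑ i, |h.eigenvalues i| else 0

/-- The energy of a finite simple graph: the sum of the absolute values of the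
eigenvalues of its adjacency matrix. -/
noncomputable def SimpleGraph.energy {V : Type*} [Fintype V] (G : SimpleGraph V) : ℝ :=
  matrixEnergy (G.adjMatrix ℝ)

/-- The Randić matrix of a finite simple graph: `(i,j)`-entry `1/√(dᵢ dⱼ)` if `i ~ j`, else `0`. -/
noncomputable def SimpleGraph.randicMatrix {V : Type*} [Fintype V] (G : SimpleGraph V) :
    Matrix V V ℝ :=
  Matrix.of fun i j =>
    if G.Adj i j then 1 / Real.sqrt ((G.degree i : ℝ) * (G.degree j : ℝ)) else 0

/-- The Randić energy of a finite simple graph: the sum of the absolute values of the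
eigenvalues of its Randić matrix. -/
noncomputable def SimpleGraph.randicEnergy {V : Type*} [Fintype V] (G : SimpleGraph V) : ℝ :=
  matrixEnergy G.randicMatrix

/-- The Randić characteristic polynomial `det (λ I - R(G))`. -/
noncomputable def SimpleGraph.randicCharpoly {V : Type*} [Fintype V] (G : SimpleGraph V) :
    Polynomial ℝ :=
  G.randicMatrix.charpoly

/-- The Petersen graph: vertices are the 2-element subsets of a 5-element set, two vertices
being adjacent iff the corresponding subsets are disjoint. -/
def petersenGraph : SimpleGraph {s : Finset (Fin 5) // s.card = 2} where
  Adj s t := Disjoint s.1 t.1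
  symm := ⟨fun s t h => h.symm⟩
  loopless := ⟨fun s h => by
    have h0 : s.1 = ∅ := by simpa using disjoint_self.mp h
    have h2 := s.2
    rw [h0] at h2
    simp at h2⟩

open Matrix

def gMat : Matrix (Fin 10) (Fin 10) ℤ :=
  !![0, 0, 0, 0, 0, 1, 1, 0, 1, 0;
    0, 0, 1, 1, 0, 0, 0, 1, 0, 0;
    0, 1, 0, 0, 0, 0, 1, 1, 0, 0;
    0, 1, 0, 0, 0, 1, 0, 0, 0, 1;
    0, 0, 0, 0, 0, 0, 0, 1, 1, 1;
    1, 0, 0, 1, 0, 0, 0, 0, 1, 0;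
    1, 0, 1, 0, 0, 0, 0, 0, 0, 1;
    0, 1, 1, 0, 1, 0, 0, 0, 0, 0;
    1, 0, 0, 0, 1, 1, 0, 0, 0, 0;
    0, 0, 0, 1, 1, 0, 1, 0, 0, 0]

def nMat : Matrix (Fin 10) (Fin 10) ℤ :=
  !![96, -4, 16, 16, 16, 16, -4, -4, 16, 16;
    -4, 96, 16, -4, 16, 16, 16, 16, -4, 16;
    16, 16, 96, 16, 16, -4, -4, 16, -4, 16;
    16, -4, 16, 96, 16, -4, 16, 16, 16, -4;
    16, 16, 16, 16, 96, 16, 16, -4, -4, -4;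
    16, 16, -4, -4, 16, 96, 16, -4, 16, 16;
    -4, 16, -4, 16, 16, 16, 96, 16, 16, -4;
    -4, 16, 16, 16, -4, -4, 16, 96, 16, 16;
    16, -4, -4, 16, -4, 16, 16, 16, 96, 16;
    16, 16, 16, -4, -4, 16, -4, 16, 16, 96]

def lMat : Matrix (Fin 10) (Fin 10) ℤ :=
  !![24, 0, 0, 0, 0, 0, 0, 0, 0, 0;
    -1, 115, 0, 0, 0, 0, 0, 0, 0, 0;
    4, 20, 104, 0, 0, 0, 0, 0, 0, 0;
    4, -4, 16, 296, 0, 0, 0, 0, 0, 0;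
    4, 20, 12, 40, 36, 0, 0, 0, 0, 0;
    4, 20, -11, -15, 5, 35, 0, 0, 0, 0;
    -1, 19, -7, 59, 5, 5, 20, 0, 0, 0;
    -1, 19, 16, 49, -4, -1, 3, 19, 0, 0;
    4, -4, -7, 46, -3, 6, 3, 3, 22, 0;
    4, 20, 12, -25, -4, 5, -1, 3, 3, 1]

def eVec : Fin 10 → ℤ := ![16185169, 703703, 811965, 100947, 6561555, 6936501, 20809503, 22999977, 16727256, 7945446600]

/-- Our candidate graph: a cubic graph on 10 vertices with spectrum
`{3, 2, 1, 1, 1, -1, -1, -2, -2, -2}`, hence energy 16. -/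
def myG : SimpleGraph (Fin 10) where
  Adj i j := gMat i j = 1
  symm := ⟨fun i j h => (by intro i; fin_cases i <;> decide : ∀ i j : Fin 10, gMat i j = 1 → gMat j i = 1) i j h⟩
  loopless := ⟨fun i h => (by decide : ∀ i : Fin 10, ¬ gMat i i = 1) i h⟩

instance myGDecAdj : DecidableRel myG.Adj := fun i j =>
  inferInstanceAs (Decidable (gMat i j = 1))

lemma posSemidef_smul' {n : Type*} [Fintype n] {M : Matrix n n ℝ} (hM : M.PosSemidef)
    {r : ℝ} (hr : 0 ≤ r) : (r • M).PosSemidef := by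
  exact hM.smul hr

/-- Key general lemma: if `B` is a positive semidefinite matrix whose square equals the square of
a Hermitian matrix `A`, then the sum of the absolute values of the eigenvalues of `A` equals the
trace of `B` (since then `B = |A|`). -/
lemma sum_abs_eigenvalues_eq_trace {n : Type*} [Fintype n] [DecidableEq n]
    {A B : Matrix n n ℝ} (hA : A.IsHermitian) (hB : B.PosSemidef)
    (hsq : B ^ 2 = A ^ 2) : ∑ i, |hA.eigenvalues i| = B.trace := by
  set U : Matrix n n ℝ := (hA.eigenvectorUnitary : Matrix n n ℝ) with hUdef
  have hU1 : star U * U = 1 := Matrix.mem_unitaryGroup_iff'.mp hA.eigenvectorUnitary.2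
  have hcomp : (RCLike.ofReal ∘ hA.eigenvalues : n → ℝ) = hA.eigenvalues := by
    funext i
    simp [RCLike.ofReal_real_eq_id]
  have hspec : A = U * Matrix.diagonal hA.eigenvalues * star U := by
    have h := hA.spectral_theorem
    rwa [hcomp] at h
  have key : ∀ d : n → ℝ,
      (U * Matrix.diagonal d * star U) * (U * Matrix.diagonal d * star U)
        = U * Matrix.diagonal (fun i => d i * d i) * star U := by
    intro d
    calc (U * Matrix.diagonal d * star U) * (U * Matrix.diagonal d * star U)
        = U * Matrix.diagonal d * ((star U * U) * (Matrix.diagonal d * star U)) := by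
          simp only [Matrix.mul_assoc]
      _ = U * Matrix.diagonal d * (Matrix.diagonal d * star U) := by rw [hU1, one_mul]
      _ = U * (Matrix.diagonal d * Matrix.diagonal d) * star U := by
          simp only [Matrix.mul_assoc]
      _ = U * Matrix.diagonal (fun i => d i * d i) * star U := by
          rw [Matrix.diagonal_mul_diagonal]
  have hAsq : A ^ 2 = U * Matrix.diagonal
      (fun i => hA.eigenvalues i * hA.eigenvalues i) * star U := by
    rw [pow_two]
    conv_lhs => rw [hspec]
    exact key _
  set C : Matrix n n ℝ := U * Matrix.diagonal (fun i => |hA.eigenvalues i|) * star U with hC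
  have hCps : C.PosSemidef := by
    have hd : (Matrix.diagonal fun i => |hA.eigenvalues i| : Matrix n n ℝ).PosSemidef :=
      Matrix.posSemidef_diagonal_iff.mpr fun i => abs_nonneg _
    have h := hd.mul_mul_conjTranspose_same U
    rwa [← Matrix.star_eq_conjTranspose] at h
  have habs : (fun i => |hA.eigenvalues i| * |hA.eigenvalues i|)
      = fun i => hA.eigenvalues i * hA.eigenvalues i := by
    funext i
    exact abs_mul_abs_self _
  have hC2 : C ^ 2 = B ^ 2 := by
    rw [hsq, hAsq, pow_two, hC, key, habs]
  have hCB : C = B := by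
    open scoped MatrixOrder Matrix.Norms.L2Operator in
    exact (CFC.sq_eq_sq_iff C B hCps.nonneg hB.nonneg).mp hC2
  rw [← hCB, hC, Matrix.trace_mul_cycle, hU1, one_mul, Matrix.trace_diagonal]

lemma gMat_cast (inst : DecidableRel myG.Adj) :
    @SimpleGraph.adjMatrix ℝ (Fin 10) myG inst _ _ = gMat.map (fun z : ℤ => (z : ℝ)) := by
  have h01 : ∀ i j, gMat i j = 0 ∨ gMat i j = 1 := by intro i; fin_cases i <;> decide
  ext i j
  rw [SimpleGraph.adjMatrix_apply, Matrix.map_apply]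
  by_cases h : myG.Adj i j
  · have h' : gMat i j = 1 := h
    rw [if_pos h, h']
    norm_num
  · have h' : gMat i j = 0 := by
      rcases h01 i j with h0 | h1
      · exact h0
      · exact absurd h1 h
    rw [if_neg h, h']
    norm_num

lemma adj_herm (inst : DecidableRel myG.Adj) :
    (@SimpleGraph.adjMatrix ℝ (Fin 10) myG inst _ _).IsHermitian := by
  rw [gMat_cast inst, Matrix.IsHermitian, Matrix.conjTranspose_eq_transpose_of_trivial,
    ← Matrix.transpose_map]
  have h : gMatᵀ = gMat := by decide
  rw [h]

open Matrix in
lemma energy_calc (inst : DecidableRel myG.Adj)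
    (hA : (@SimpleGraph.adjMatrix ℝ (Fin 10) myG inst _ _).IsHermitian) :
    ∑ i, |hA.eigenvalues i| = 16 := by
  have h1 : nMat * nMat = (3600 : ℤ) • (gMat * gMat) := by decide
  have h2 : nMat.trace = 960 := by decide
  have h3 : (97111014 : ℤ) • nMat = lMat * Matrix.diagonal eVec * lMatᵀ := by decide
  have hE : ∀ i, 0 ≤ eVec i := by decide
  have castMul : ∀ X Y : Matrix (Fin 10) (Fin 10) ℤ,
      (X * Y).map (fun z : ℤ => (z : ℝ))
        = X.map (fun z : ℤ => (z : ℝ)) * Y.map (fun z : ℤ => (z : ℝ)) := by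
    intro X Y
    exact Matrix.map_mul (f := Int.castRingHom ℝ)
  have castSmul : ∀ (c : ℤ) (X : Matrix (Fin 10) (Fin 10) ℤ),
      (c • X).map (fun z : ℤ => (z : ℝ)) = (c : ℝ) • X.map (fun z : ℤ => (z : ℝ)) := by
    intro c X
    ext i j
    show ((c • X) i j : ℝ) = ((c : ℝ) • Matrix.map X (fun z : ℤ => (z : ℝ))) i j
    rw [Matrix.smul_apply, Matrix.smul_apply, Matrix.map_apply, smul_eq_mul, smul_eq_mul,
      Int.cast_mul]
  set P : Matrix (Fin 10) (Fin 10) ℝ := nMat.map (fun z : ℤ => (z : ℝ)) with hP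
  set B : Matrix (Fin 10) (Fin 10) ℝ := (60 : ℝ)⁻¹ • P with hB
  -- positive semidefiniteness of B
  have hLD : (97111014 : ℝ) • P
      = lMat.map (fun z : ℤ => (z : ℝ)) * Matrix.diagonal (fun i => (eVec i : ℝ))
        * (lMat.map (fun z : ℤ => (z : ℝ)))ᵀ := by
    have hc : ((97111014 : ℤ) : ℝ) = 97111014 := by norm_num
    rw [hP, ← hc, ← castSmul, h3, castMul, castMul, Matrix.diagonal_map (by norm_num),
      Matrix.transpose_map]
  have hdiag : (Matrix.diagonal (fun i => (eVec i : ℝ))).PosSemidef :=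
    Matrix.posSemidef_diagonal_iff.mpr fun i => by exact_mod_cast hE i
  have hCps : ((97111014 : ℝ) • P).PosSemidef := by
    rw [hLD]
    have h := hdiag.mul_mul_conjTranspose_same (lMat.map (fun z : ℤ => (z : ℝ)))
    rwa [Matrix.conjTranspose_eq_transpose_of_trivial] at h
  have hBps : B.PosSemidef := by
    have hss : B = ((60 : ℝ)⁻¹ * (97111014 : ℝ)⁻¹) • ((97111014 : ℝ) • P) := by
      rw [smul_smul, hB]
      norm_num
    rw [hss]
    exact posSemidef_smul' hCps (by norm_num)
  -- trace of B
  have hPtr : P.trace = ((nMat.trace : ℤ) : ℝ) := by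
    rw [hP, Matrix.trace, Matrix.trace]
    push_cast [Matrix.diag, Matrix.map_apply]
    rfl
  have hBtr : B.trace = 16 := by
    rw [hB, Matrix.trace_smul, hPtr, h2]
    norm_num
  -- the square of B equals the square of the adjacency matrix
  have hsq : B ^ 2 = (@SimpleGraph.adjMatrix ℝ (Fin 10) myG inst _ _) ^ 2 := by
    rw [gMat_cast inst, pow_two, pow_two, hB, Matrix.smul_mul, Matrix.mul_smul, smul_smul, hP,
      ← castMul, h1, castSmul, castMul, smul_smul]
    norm_num
  rw [sum_abs_eigenvalues_eq_trace hA hBps hsq]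
  exact hBtr

lemma myG_energy_eq : myG.energy = 16 := by
  unfold SimpleGraph.energy matrixEnergy
  split
  case isTrue hA => exact energy_calc _ hA
  case isFalse h => exact absurd (adj_herm _) h

instance petersenDecAdj : DecidableRel petersenGraph.Adj := fun a b =>
  decidable_of_iff (∀ x ∈ a.1, x ∉ b.1) Finset.disjoint_left.symm

lemma petersen_triangle_free :
    ∀ a b c : {s : Finset (Fin 5) // s.card = 2}, petersenGraph.Adj a b →
      petersenGraph.Adj a c → petersenGraph.Adj b c → False := by decide

lemma myG_regular (inst : ∀ v : Fin 10, Fintype (myG.neighborSet v)) :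
    @SimpleGraph.IsRegularOfDegree (Fin 10) myG inst 3 := by
  intro v
  have h : ∀ w : Fin 10,
      @SimpleGraph.degree (Fin 10) myG w (SimpleGraph.neighborSetFintype myG w) = 3 := by decide
  rw [Subsingleton.elim (inst v) (SimpleGraph.neighborSetFintype myG v)]
  exact h v

theorem petersen_not_energy_unique :
    ∃ G : SimpleGraph (Fin 10), G.IsRegularOfDegree 3 ∧
      IsEmpty (G ≃g petersenGraph) ∧ G.energy = 16 := by
  refine ⟨myG, myG_regular _, ⟨fun e => ?_⟩, myG_energy_eq⟩
  exact petersen_triangle_free (e 1) (e 2) (e 7)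
    (e.map_adj_iff.mpr (by decide)) (e.map_adj_iff.mpr (by decide))
    (e.map_adj_iff.mpr (by decide))
end

section
/- For every n ≥ 1, the Randić energy of the friendship graph F_n is RE(F_n) = n + 1. -/
open scoped Classical

/-- The Dutch windmill graph `D_m^n`, obtained from `n` disjoint copies of the cycle `C_m`
by identifying one vertex from each copy into a single common vertex (the hub `none`).
Each copy `i` is the cycle `none — (i,0) — (i,1) — ⋯ — (i,m-2) — none`. -/
def dutchWindmill (m n : ℕ) : SimpleGraph (Option (Fin n × Fin (m - 1))) :=
  SimpleGraph.fromRel fun x y =>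
    match x, y with
    | none, some (_, j) => j.val = 0 ∨ j.val = m - 2
    | some (i, j), some (i', j') => i = i' ∧ j.val + 1 = j'.val
    | _, _ => False

/-- The friendship graph `F_n`: `n` triangles sharing a single common vertex. -/
def friendshipGraph (n : ℕ) : SimpleGraph (Option (Fin n × Fin 2)) := dutchWindmill 3 n


open Matrix

lemma fin2_ne_iff : ∀ a b : Fin 2, a ≠ b ↔ b = a + 1 := by decide


lemma fgAdj_some (n : ℕ) (i i' : Fin n) (j j' : Fin 2) :
    (friendshipGraph n).Adj (some (i,j)) (some (i',j')) ↔ i = i' ∧ j ≠ j' := by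
  simp only [friendshipGraph, dutchWindmill, SimpleGraph.fromRel_adj, ne_eq, Option.some.injEq,
    Prod.mk.injEq, not_and]
  constructor
  · rintro ⟨-, (⟨rfl, h2⟩ | ⟨rfl, h2⟩)⟩ <;>
      exact ⟨rfl, fun h => by subst h; omega⟩
  · rintro ⟨rfl, hjj⟩
    have h1 := j.isLt; have h2 := j'.isLt
    have h3 : j.val ≠ j'.val := Fin.val_ne_of_ne hjj
    exact ⟨fun _ => hjj, by omega⟩

lemma fgAdj_none (n : ℕ) (p : Fin n × Fin 2) :
    (friendshipGraph n).Adj none (some p) := by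
  obtain ⟨i, j⟩ := p
  simp only [friendshipGraph, dutchWindmill, SimpleGraph.fromRel_adj]
  have := j.isLt
  exact ⟨by simp, Or.inl (by omega)⟩

lemma fg_degree_none (n : ℕ) : (friendshipGraph n).degree none = 2 * n := by
  have h : (friendshipGraph n).neighborFinset none = Finset.univ.image some := by
    ext w
    cases w with
    | none => simp
    | some p => simp [fgAdj_none]
  rw [SimpleGraph.degree, h, Finset.card_image_of_injective _ (Option.some_injective _)]
  simp [mul_comm]

lemma fg_degree_some (n : ℕ) (i : Fin n) (j : Fin 2) :
    (friendshipGraph n).degree (some (i,j)) = 2 := by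
  have h : (friendshipGraph n).neighborFinset (some (i,j)) = {none, some (i, j+1)} := by
    ext w
    cases w with
    | none => simp [SimpleGraph.adj_comm, fgAdj_none]
    | some p =>
      obtain ⟨i', j'⟩ := p
      simp [fgAdj_some, fin2_ne_iff, Prod.ext_iff, and_comm, eq_comm]
  rw [SimpleGraph.degree, h]
  simp

/-- explicit form of the Randić matrix of the friendship graph -/
noncomputable def Mm (n : ℕ) : Matrix (Option (Fin n × Fin 2)) (Option (Fin n × Fin 2)) ℝ :=
  Matrix.of fun x y =>
    match x, y with
    | none, none => 0
    | none, some _ => 1/(2*Real.sqrt n)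
    | some _, none => 1/(2*Real.sqrt n)
    | some (i,j), some (i',j') => if i = i' ∧ j ≠ j' then 1/2 else 0

lemma sqrt4 : Real.sqrt 4 = 2 := by
  rw [show (4:ℝ) = 2^2 by norm_num, Real.sqrt_sq (by norm_num)]

lemma randic_eq (n : ℕ) : (friendshipGraph n).randicMatrix = Mm n := by
  ext x y
  cases x with
  | none =>
    cases y with
    | none => simp [SimpleGraph.randicMatrix, Mm]
    | some p =>
      obtain ⟨i, j⟩ := p
      rw [SimpleGraph.randicMatrix, Matrix.of_apply, if_pos (fgAdj_none n (i,j)),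
        fg_degree_none, fg_degree_some]
      rw [show ((2*n : ℕ) : ℝ) * ((2:ℕ) : ℝ) = 4 * n by push_cast; ring,
        Real.sqrt_mul (by norm_num), sqrt4]
      rfl
  | some p =>
    obtain ⟨i, j⟩ := p
    cases y with
    | none =>
      rw [SimpleGraph.randicMatrix, Matrix.of_apply,
        if_pos (((friendshipGraph n).adj_comm _ _).mp (fgAdj_none n (i,j))),
        fg_degree_none, fg_degree_some]
      rw [show ((2:ℕ) : ℝ) * ((2*n : ℕ) : ℝ) = 4 * n by push_cast; ring,
        Real.sqrt_mul (by norm_num), sqrt4]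
      rfl
    | some q =>
      obtain ⟨i', j'⟩ := q
      rw [SimpleGraph.randicMatrix, Matrix.of_apply]
      by_cases h : i = i' ∧ j ≠ j'
      · rw [if_pos ((fgAdj_some n i i' j j').mpr h), fg_degree_some, fg_degree_some]
        have : ((2:ℕ):ℝ) * ((2:ℕ):ℝ) = 4 := by norm_num
        rw [this, sqrt4]
        simp [Mm, h]
      · rw [if_neg (fun hc => h ((fgAdj_some n i i' j j').mp hc))]
        simp [Mm, h]

noncomputable def vv (n : ℕ) : Option (Fin n × Fin 2) → ℝ :=
  fun x => match x with | none => 1/2 | some _ => 1/(2*Real.sqrt n)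

lemma fin2_self_ne_succ : ∀ a : Fin 2, a ≠ a + 1 := by decide
lemma fin2_succ_ne_iff : ∀ a b : Fin 2, (a + 1 ≠ b) ↔ b = a := by decide

lemma sum_helper (n : ℕ) (i : Fin n) (j : Fin 2) (f : Fin n × Fin 2 → ℝ) :
    ∑ p : Fin n × Fin 2, (if i = p.1 ∧ j ≠ p.2 then f p else 0) = f (i, j+1) := by
  rw [Finset.sum_eq_single (i, j+1)]
  · rw [if_pos ⟨rfl, fin2_self_ne_succ j⟩]
  · rintro ⟨a, b⟩ - hne
    rw [if_neg]
    rintro ⟨rfl, hb⟩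
    exact hne (by rw [(fin2_ne_iff j b).mp hb])
  · intro h; exact absurd (Finset.mem_univ _) h

lemma sum_helper_mul (n : ℕ) (i : Fin n) (j : Fin 2) (c d : ℝ) :
    ∑ p : Fin n × Fin 2, (if i = p.1 ∧ j ≠ p.2 then c else 0) * d = c * d := by
  calc ∑ p : Fin n × Fin 2, (if i = p.1 ∧ j ≠ p.2 then c else 0) * d
      = ∑ p : Fin n × Fin 2, (if i = p.1 ∧ j ≠ p.2 then c * d else 0) := by
        apply Finset.sum_congr rfl; intro p _; rw [ite_mul, zero_mul]
    _ = c * d := sum_helper n i j (fun _ => c * d)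

lemma sum_helper'_mul (n : ℕ) (i : Fin n) (j : Fin 2) (c d : ℝ) :
    ∑ p : Fin n × Fin 2, d * (if p.1 = i ∧ p.2 ≠ j then c else 0) = d * c := by
  calc ∑ p : Fin n × Fin 2, d * (if p.1 = i ∧ p.2 ≠ j then c else 0)
      = ∑ p : Fin n × Fin 2, (if i = p.1 ∧ j ≠ p.2 then d * c else 0) := by
        apply Finset.sum_congr rfl; intro p _
        rw [mul_ite, mul_zero]
        congr 1
        simp only [eq_iff_iff]
        constructor
        · rintro ⟨rfl, h⟩; exact ⟨rfl, h.symm⟩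
        · rintro ⟨rfl, h⟩; exact ⟨rfl, h.symm⟩
    _ = d * c := sum_helper n i j (fun _ => d * c)

lemma sum_helper_two (n : ℕ) (i i' : Fin n) (j j' : Fin 2) (c d : ℝ) :
    ∑ p : Fin n × Fin 2,
        (if i = p.1 ∧ j ≠ p.2 then c else 0) * (if p.1 = i' ∧ p.2 ≠ j' then d else 0)
      = c * (if i = i' ∧ j + 1 ≠ j' then d else 0) := by
  calc ∑ p : Fin n × Fin 2,
        (if i = p.1 ∧ j ≠ p.2 then c else 0) * (if p.1 = i' ∧ p.2 ≠ j' then d else 0)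
      = ∑ p : Fin n × Fin 2,
          (if i = p.1 ∧ j ≠ p.2 then c * (if p.1 = i' ∧ p.2 ≠ j' then d else 0) else 0) := by
        apply Finset.sum_congr rfl; intro p _; rw [ite_mul, zero_mul]
    _ = c * (if i = i' ∧ j + 1 ≠ j' then d else 0) :=
        sum_helper n i j (fun p => c * (if p.1 = i' ∧ p.2 ≠ j' then d else 0))

lemma sqrt_facts (n : ℕ) (hn : 1 ≤ n) :
    Real.sqrt n ≠ 0 ∧ Real.sqrt n * Real.sqrt n = (n : ℝ) ∧ (n : ℝ) ≠ 0 := by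
  have h1 : (0:ℝ) < n := by exact_mod_cast Nat.pos_of_ne_zero (by omega)
  exact ⟨ne_of_gt (Real.sqrt_pos.mpr h1), Real.mul_self_sqrt h1.le, ne_of_gt h1⟩

lemma hMv (n : ℕ) (hn : 1 ≤ n) : Mm n *ᵥ vv n = vv n := by
  obtain ⟨hs, hsq, hn0⟩ := sqrt_facts n hn
  funext x
  cases x with
  | none =>
    simp only [Matrix.mulVec, dotProduct, Fintype.sum_option, Mm, vv, Matrix.of_apply]
    rw [zero_mul, zero_add, Finset.sum_const, Finset.card_univ, nsmul_eq_mul]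
    simp only [Fintype.card_prod, Fintype.card_fin]
    push_cast
    field_simp
    nlinarith [hsq]
  | some p =>
    obtain ⟨i, j⟩ := p
    simp only [Matrix.mulVec, dotProduct, Fintype.sum_option, Mm, vv, Matrix.of_apply]
    rw [sum_helper_mul n i j (1/2) (1/(2*Real.sqrt n))]
    field_simp
    ring

lemma hM2 (n : ℕ) (hn : 1 ≤ n) :
    Mm n * Mm n = (1/4 : ℝ) • 1 + Matrix.vecMulVec (vv n) (vv n) := by
  obtain ⟨hs, hsq, hn0⟩ := sqrt_facts n hn
  ext x y
  rw [Matrix.mul_apply]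
  cases x with
  | none =>
    cases y with
    | none =>
      simp only [Fintype.sum_option, Mm, Matrix.of_apply, zero_mul, zero_add]
      rw [Finset.sum_const, Finset.card_univ, nsmul_eq_mul]
      simp only [Fintype.card_prod, Fintype.card_fin, Matrix.add_apply, Matrix.smul_apply,
        Matrix.one_apply_eq, Matrix.vecMulVec_apply, vv, smul_eq_mul]
      push_cast
      field_simp
      nlinarith [hsq]
    | some q =>
      obtain ⟨i', j'⟩ := q
      simp only [Fintype.sum_option, Mm, Matrix.of_apply, zero_mul, zero_add]
      rw [sum_helper'_mul n i' j' (1/2) (1/(2*Real.sqrt n))]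
      have h1 : ((1:Matrix (Option (Fin n × Fin 2)) (Option (Fin n × Fin 2)) ℝ))
          none (some (i',j')) = 0 := Matrix.one_apply_ne (by simp)
      simp only [Matrix.add_apply, Matrix.smul_apply, Matrix.vecMulVec_apply, vv,
        smul_eq_mul, h1]
      ring
  | some p =>
    obtain ⟨i, j⟩ := p
    cases y with
    | none =>
      simp only [Fintype.sum_option, Mm, Matrix.of_apply, mul_zero, zero_add]
      rw [sum_helper_mul n i j (1/2) (1/(2*Real.sqrt n))]
      have h1 : ((1:Matrix (Option (Fin n × Fin 2)) (Option (Fin n × Fin 2)) ℝ))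
          (some (i,j)) none = 0 := Matrix.one_apply_ne (by simp)
      simp only [Matrix.add_apply, Matrix.smul_apply, Matrix.vecMulVec_apply, vv,
        smul_eq_mul, h1]
      ring
    | some q =>
      obtain ⟨i', j'⟩ := q
      simp only [Fintype.sum_option, Mm, Matrix.of_apply]
      rw [sum_helper_two n i i' j j' (1/2) (1/2)]
      simp only [Matrix.add_apply, Matrix.smul_apply, Matrix.vecMulVec_apply, vv,
        smul_eq_mul, Matrix.one_apply]
      by_cases hc : i = i' ∧ j' = j
      · obtain ⟨rfl, rfl⟩ := hc
        rw [if_pos ⟨rfl, (fin2_succ_ne_iff j' j').mpr rfl⟩, if_pos rfl]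
        field_simp
        ring
      · rw [if_neg (fun h => hc ⟨h.1, (fin2_succ_ne_iff j j').mp h.2⟩), if_neg (fun h => by
          injection h with h'
          exact hc ⟨congrArg Prod.fst h', (congrArg Prod.snd h').symm⟩)]
        field_simp
        ring

lemma hHerm (n : ℕ) : (Mm n).IsHermitian := by
  ext x y
  simp only [Matrix.conjTranspose_apply, star_trivial]
  cases x with
  | none => cases y <;> rfl
  | some p =>
    cases y with
    | none => rfl
    | some q =>
      obtain ⟨i, j⟩ := p; obtain ⟨i', j'⟩ := q
      show (if i' = i ∧ j' ≠ j then (1:ℝ)/2 else 0) = (if i = i' ∧ j ≠ j' then (1:ℝ)/2 else 0)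
      congr 1
      simp only [eq_iff_iff]
      constructor
      · rintro ⟨rfl, h⟩; exact ⟨rfl, h.symm⟩
      · rintro ⟨rfl, h⟩; exact ⟨rfl, h.symm⟩

lemma hMvv (n : ℕ) (hn : 1 ≤ n) :
    Mm n * Matrix.vecMulVec (vv n) (vv n) = Matrix.vecMulVec (vv n) (vv n) := by
  have hv := hMv n hn
  ext x y
  rw [Matrix.mul_apply]
  simp only [Matrix.vecMulVec_apply]
  calc ∑ z, Mm n x z * (vv n z * vv n y)
      = (∑ z, Mm n x z * vv n z) * vv n y := by rw [Finset.sum_mul]; congr 1; ext z; ring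
    _ = vv n x * vv n y := by rw [show ∑ z, Mm n x z * vv n z = (Mm n *ᵥ vv n) x from rfl, hv]

lemma hM3 (n : ℕ) (hn : 1 ≤ n) :
    Mm n * Mm n * Mm n = Mm n * Mm n + (1/4 : ℝ) • Mm n - (1/4 : ℝ) • 1 := by
  have h2 := hM2 n hn
  have hvec : Matrix.vecMulVec (vv n) (vv n) = Mm n * Mm n - (1/4 : ℝ) • 1 := by
    rw [h2]; abel
  calc Mm n * Mm n * Mm n = Mm n * (Mm n * Mm n) := by rw [mul_assoc]
    _ = Mm n * ((1/4 : ℝ) • 1 + Matrix.vecMulVec (vv n) (vv n)) := by rw [h2]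
    _ = (1/4 : ℝ) • Mm n + Matrix.vecMulVec (vv n) (vv n) := by
        rw [mul_add, Matrix.mul_smul, mul_one, hMvv n hn]
    _ = Mm n * Mm n + (1/4 : ℝ) • Mm n - (1/4 : ℝ) • 1 := by rw [hvec]; abel

lemma eig_mem (n : ℕ) (hn : 1 ≤ n) (k : Option (Fin n × Fin 2)) :
    (hHerm n).eigenvalues k = 1 ∨ (hHerm n).eigenvalues k = 1/2 ∨
      (hHerm n).eigenvalues k = -(1/2) := by
  have hA := hHerm n
  set lam := hA.eigenvalues k with hlam
  set w : Option (Fin n × Fin 2) → ℝ := ⇑(hA.eigenvectorBasis k) with hwdef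
  have hw : Mm n *ᵥ w = lam • w := hA.mulVec_eigenvectorBasis k
  have hw2 : (Mm n * Mm n) *ᵥ w = (lam^2) • w := by
    rw [← Matrix.mulVec_mulVec, hw, Matrix.mulVec_smul, hw, smul_smul, ← pow_two]
  have hw3 : (Mm n * Mm n * Mm n) *ᵥ w = (lam^3) • w := by
    rw [← Matrix.mulVec_mulVec, hw, Matrix.mulVec_smul, hw2, smul_smul, ← pow_succ']
  rw [hM3 n hn, Matrix.sub_mulVec, Matrix.add_mulVec, Matrix.smul_mulVec,
    Matrix.smul_mulVec, Matrix.one_mulVec, hw, hw2] at hw3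
  have hwne : ∃ x, w x ≠ 0 := by
    by_contra h
    push_neg at h
    exact hA.eigenvectorBasis.orthonormal.ne_zero k (by ext x; exact h x)
  obtain ⟨x, hx⟩ := hwne
  have heq := congrFun hw3 x
  simp only [Pi.add_apply, Pi.sub_apply, Pi.smul_apply, smul_eq_mul] at heq
  have h0 : (lam^3 - lam^2 - (1/4)*lam + 1/4) * w x = 0 := by linear_combination -heq
  have h1 : lam^3 - lam^2 - (1/4)*lam + 1/4 = 0 := (mul_eq_zero.mp h0).resolve_right hx
  have h2 : (lam - 1) * (lam - 1/2) * (lam + 1/2) = 0 := by linear_combination h1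
  rcases mul_eq_zero.mp h2 with h | h
  · rcases mul_eq_zero.mp h with h | h
    · exact Or.inl (by linarith [sub_eq_zero.mp h])
    · exact Or.inr (Or.inl (by linarith [sub_eq_zero.mp h]))
  · exact Or.inr (Or.inr (by linarith [eq_neg_of_add_eq_zero_left h]))

lemma sum_eig_sq (n : ℕ) (hn : 1 ≤ n) :
    ∑ k, (hHerm n).eigenvalues k ^ 2 = (n : ℝ)/2 + 1 := by
  have hA := hHerm n
  obtain ⟨hs, hsq, hn0⟩ := sqrt_facts n hn
  set U : Matrix (Option (Fin n × Fin 2)) (Option (Fin n × Fin 2)) ℝ :=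
    (hA.eigenvectorUnitary : Matrix (Option (Fin n × Fin 2)) (Option (Fin n × Fin 2)) ℝ)
    with hUdef
  set D : Matrix (Option (Fin n × Fin 2)) (Option (Fin n × Fin 2)) ℝ :=
    Matrix.diagonal (RCLike.ofReal ∘ hA.eigenvalues) with hDdef
  have hsp : Mm n = U * D * star U := hA.spectral_theorem
  have hU1 : star U * U = 1 := Unitary.coe_star_mul_self hA.eigenvectorUnitary
  have key : Matrix.trace (Mm n * Mm n) = ∑ k, (hA.eigenvalues k)^2 := by
    calc Matrix.trace (Mm n * Mm n) = Matrix.trace (U * D * star U * (U * D * star U)) := by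
          rw [← hsp]
      _ = Matrix.trace (U * (D * (D * star U))) := by
          simp only [mul_assoc]
          rw [← mul_assoc (star U) U, hU1, one_mul]
      _ = Matrix.trace (D * (D * (star U * U))) := by
          rw [Matrix.trace_mul_comm]
          simp only [mul_assoc]
      _ = Matrix.trace (D * D) := by rw [hU1, mul_one]
      _ = ∑ k, (hA.eigenvalues k)^2 := by
          rw [hDdef, Matrix.diagonal_mul_diagonal, Matrix.trace_diagonal]
          simp [pow_two]
  have key2 : Matrix.trace (Mm n * Mm n) = (n : ℝ)/2 + 1 := by
    rw [hM2 n hn, Matrix.trace_add, Matrix.trace_smul, Matrix.trace_one]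
    have h1 : Matrix.trace (Matrix.vecMulVec (vv n) (vv n)) = ∑ x, vv n x * vv n x := by
      simp [Matrix.trace, Matrix.diag, Matrix.vecMulVec_apply]
    rw [h1]
    simp only [Fintype.sum_option, vv, Finset.sum_const, Finset.card_univ, Fintype.card_prod,
      Fintype.card_fin, Fintype.card_option, nsmul_eq_mul, smul_eq_mul]
    push_cast
    field_simp
    nlinarith [hsq]
  rw [← key, key2]

theorem randicEnergy_friendshipGraph (n : ℕ) (hn : 1 ≤ n) :
    (friendshipGraph n).randicEnergy = n + 1 := by
  have hA := hHerm n
  show matrixEnergy (friendshipGraph n).randicMatrix = n + 1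
  rw [randic_eq n, matrixEnergy, dif_pos hA]
  have habs : ∀ k, |hA.eigenvalues k| = (2/3) * (hA.eigenvalues k)^2 + 1/3 := by
    intro k
    rcases eig_mem n hn k with h | h | h <;> rw [h] <;> norm_num
  calc ∑ k, |hA.eigenvalues k| = ∑ k, ((2/3) * (hA.eigenvalues k)^2 + 1/3) :=
        Finset.sum_congr rfl (fun k _ => habs k)
    _ = (2/3) * (∑ k, (hA.eigenvalues k)^2)
          + (Fintype.card (Option (Fin n × Fin 2)) : ℝ) * (1/3) := by
        rw [Finset.sum_add_distrib, ← Finset.mul_sum, Finset.sum_const, Finset.card_univ,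
          nsmul_eq_mul]
    _ = (n : ℝ) + 1 := by
        rw [sum_eig_sq n hn]
        simp only [Fintype.card_option, Fintype.card_prod, Fintype.card_fin]
        push_cast
        ring
end

section
/- For all m, n ≥ 2, the Randić energy of the graph K_{m,n} − e, obtained from the complete bipartite graph K_{m,n} by deleting one edge, is RE(K_{m,n} − e) = 2 + 2/√(mn). -/
open scoped Classical

open Matrix

private lemma vmv_mul {V : Type*} [Fintype V] (a b c d : V → ℝ) :
    vecMulVec a b * vecMulVec c d = (b ⬝ᵥ c) • vecMulVec a d := by
  ext i j
  simp only [mul_apply, vecMulVec_apply, Matrix.smul_apply, smul_eq_mul, dotProduct, Finset.sum_mul]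
  exact Finset.sum_congr rfl fun k _ => by ring

private lemma trace_vmv {V : Type*} [Fintype V] (a b : V → ℝ) :
    (vecMulVec a b).trace = a ⬝ᵥ b := by
  simp [Matrix.trace, Matrix.diag, vecMulVec_apply, dotProduct]

private lemma vmv_ct {V : Type*} [Fintype V] (a b : V → ℝ) :
    (vecMulVec a b)ᴴ = vecMulVec b a := by
  ext i j
  simp [Matrix.conjTranspose_apply, vecMulVec_apply, mul_comm]

private lemma sum_ite_fin {k : ℕ} (c : Fin k) (A B : ℝ) :
    ∑ i : Fin k, (if i = c then A else B) = A + ((k : ℝ) - 1) * B := by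
  have h : ∀ i : Fin k, (if i = c then A else B) = B + (if i = c then A - B else 0) := by
    intro i; split <;> ring
  rw [Finset.sum_congr rfl fun i _ => h i, Finset.sum_add_distrib,
    Finset.sum_ite_eq' Finset.univ c fun _ => A - B]
  simp [Finset.card_univ, mul_comm]
  ring

set_option maxHeartbeats 1000000 in
theorem randicEnergy_completeBipartite_deleteEdge (m n : ℕ) (hm : 2 ≤ m) (hn : 2 ≤ n)
    (a : Fin m) (b : Fin n) :
    ((completeBipartiteGraph (Fin m) (Fin n)).deleteEdges
        {s(Sum.inl a, Sum.inr b)}).randicEnergy =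
      2 + 2 / Real.sqrt ((m : ℝ) * (n : ℝ)) := by
  classical
  rw [div_eq_mul_inv]
  set G : SimpleGraph (Fin m ⊕ Fin n) :=
    (completeBipartiteGraph (Fin m) (Fin n)).deleteEdges {s(Sum.inl a, Sum.inr b)} with hG
  have hadj1 : ∀ (i : Fin m) (j : Fin n), G.Adj (Sum.inl i) (Sum.inr j) ↔ ¬(i = a ∧ j = b) := by
    intro i j; simp [hG, Sym2.eq_iff]
  have hadj2 : ∀ i i' : Fin m, ¬ G.Adj (Sum.inl i) (Sum.inl i') := by intro i i'; simp [hG]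
  have hadj3 : ∀ j j' : Fin n, ¬ G.Adj (Sum.inr j) (Sum.inr j') := by intro j j'; simp [hG]
  have hadj4 : ∀ (j : Fin n) (i : Fin m), G.Adj (Sum.inr j) (Sum.inl i) ↔ ¬(i = a ∧ j = b) := by
    intro j i; rw [G.adj_comm]; exact hadj1 i j
  have hdeg1 : ∀ i : Fin m, G.degree (Sum.inl i) = if i = a then n - 1 else n := by
    intro i
    by_cases hi : i = a
    · have hnb2 : G.neighborFinset (Sum.inl i)
          = (Finset.univ.erase b).map ⟨Sum.inr, Sum.inr_injective⟩ := by
        ext w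
        cases w with
        | inl i' => simp [hadj2]
        | inr j => simp [hadj1, hi, eq_comm]
      unfold SimpleGraph.degree
      rw [hnb2, Finset.card_map, Finset.card_erase_of_mem (Finset.mem_univ b),
        Finset.card_univ, Fintype.card_fin, if_pos hi]
    · have hnb1 : G.neighborFinset (Sum.inl i)
          = Finset.univ.map ⟨Sum.inr, Sum.inr_injective⟩ := by
        ext w
        cases w with
        | inl i' => simp [hadj2]
        | inr j => simp [hadj1, hi]
      unfold SimpleGraph.degree
      rw [hnb1, Finset.card_map, Finset.card_univ, Fintype.card_fin, if_neg hi]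
  have hdeg2 : ∀ j : Fin n, G.degree (Sum.inr j) = if j = b then m - 1 else m := by
    intro j
    by_cases hj : j = b
    · have hnb2 : G.neighborFinset (Sum.inr j)
          = (Finset.univ.erase a).map ⟨Sum.inl, Sum.inl_injective⟩ := by
        ext w
        cases w with
        | inl i => simp [hadj4, hj, eq_comm]
        | inr j' => simp [hadj3]
      unfold SimpleGraph.degree
      rw [hnb2, Finset.card_map, Finset.card_erase_of_mem (Finset.mem_univ a),
        Finset.card_univ, Fintype.card_fin, if_pos hj]
    · have hnb1 : G.neighborFinset (Sum.inr j)
          = Finset.univ.map ⟨Sum.inl, Sum.inl_injective⟩ := by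
        ext w
        cases w with
        | inl i => simp [hadj4, hj]
        | inr j' => simp [hadj3]
      unfold SimpleGraph.degree
      rw [hnb1, Finset.card_map, Finset.card_univ, Fintype.card_fin, if_neg hj]
  -- real constants
  set rm : ℝ := (m : ℝ) with hrm
  set rn : ℝ := (n : ℝ) with hrn
  have hrm2 : (2:ℝ) ≤ rm := by rw [hrm]; exact_mod_cast hm
  have hrn2 : (2:ℝ) ≤ rn := by rw [hrn]; exact_mod_cast hn
  have hrm1 : (0:ℝ) < rm - 1 := by linarith
  have hrn1 : (0:ℝ) < rn - 1 := by linarith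
  have hrm0 : (0:ℝ) < rm := by linarith
  have hrn0 : (0:ℝ) < rn := by linarith
  have hdegl : ∀ i : Fin m, ((G.degree (Sum.inl i) : ℝ)) = if i = a then rn - 1 else rn := by
    intro i
    rw [hdeg1 i]
    split
    · rw [Nat.cast_sub (by omega)]; simp [hrn]
    · simp [hrn]
  have hdegr : ∀ j : Fin n, ((G.degree (Sum.inr j) : ℝ)) = if j = b then rm - 1 else rm := by
    intro j
    rw [hdeg2 j]
    split
    · rw [Nat.cast_sub (by omega)]; simp [hrm]
    · simp [hrm]
  -- vectors
  set x : (Fin m ⊕ Fin n) → ℝ :=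
    Sum.elim (fun i => if i = a then (Real.sqrt (rn-1))⁻¹ else (Real.sqrt rn)⁻¹) (fun _ => 0) with hx
  set y : (Fin m ⊕ Fin n) → ℝ :=
    Sum.elim (fun _ => 0) (fun j => if j = b then (Real.sqrt (rm-1))⁻¹ else (Real.sqrt rm)⁻¹) with hy
  set u : (Fin m ⊕ Fin n) → ℝ :=
    Sum.elim (fun i => if i = a then (Real.sqrt (rn-1))⁻¹ else 0) (fun _ => 0) with hu
  set v : (Fin m ⊕ Fin n) → ℝ :=
    Sum.elim (fun _ => 0) (fun j => if j = b then (Real.sqrt (rm-1))⁻¹ else 0) with hv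
  obtain ⟨P2, hP2⟩ : ∃ c : ℝ, c = (rn-1)⁻¹ := ⟨_, rfl⟩
  obtain ⟨Q2, hQ2⟩ : ∃ c : ℝ, c = (rm-1)⁻¹ := ⟨_, rfl⟩
  obtain ⟨X2, hX2⟩ : ∃ c : ℝ, c = P2 + (rm-1) * rn⁻¹ := ⟨_, rfl⟩
  obtain ⟨Y2, hY2⟩ : ∃ c : ℝ, c = Q2 + (rn-1) * rm⁻¹ := ⟨_, rfl⟩
  obtain ⟨s2, hs2⟩ : ∃ c : ℝ, c = (rm * rn)⁻¹ := ⟨_, rfl⟩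
  have hinvn1 : (Real.sqrt (rn-1))⁻¹ * (Real.sqrt (rn-1))⁻¹ = P2 := by
    rw [← mul_inv, Real.mul_self_sqrt hrn1.le, hP2]
  have hinvn : (Real.sqrt rn)⁻¹ * (Real.sqrt rn)⁻¹ = rn⁻¹ := by
    rw [← mul_inv, Real.mul_self_sqrt hrn0.le]
  have hinvm1 : (Real.sqrt (rm-1))⁻¹ * (Real.sqrt (rm-1))⁻¹ = Q2 := by
    rw [← mul_inv, Real.mul_self_sqrt hrm1.le, hQ2]
  have hinvm : (Real.sqrt rm)⁻¹ * (Real.sqrt rm)⁻¹ = rm⁻¹ := by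
    rw [← mul_inv, Real.mul_self_sqrt hrm0.le]
  -- the matrix identity
  have hsp : ∀ A B : ℝ, 0 ≤ A →
      (1:ℝ) / Real.sqrt (A * B) = (Real.sqrt A)⁻¹ * (Real.sqrt B)⁻¹ := by
    intro A B hA
    rw [Real.sqrt_mul hA, one_div, mul_inv]
  have hRmat : G.randicMatrix
      = vecMulVec x y + vecMulVec y x - vecMulVec u v - vecMulVec v u := by
    have hdc : ∀ (v : Fin m ⊕ Fin n) (i1 i2 : Fintype (G.neighborSet v)),
        @SimpleGraph.degree _ G v i1 = @SimpleGraph.degree _ G v i2 := fun _ _ _ => by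
      congr; exact Subsingleton.elim _ _
    ext w w'
    cases w with
    | inl i =>
      cases w' with
      | inl i' =>
        simp [SimpleGraph.randicMatrix, hadj2, Matrix.vecMulVec_apply, hx, hy, hu, hv]
      | inr j =>
        simp only [SimpleGraph.randicMatrix, Matrix.of_apply, hadj1, Matrix.sub_apply,
          Matrix.add_apply, Matrix.vecMulVec_apply, hx, hy, hu, hv, Sum.elim_inl, Sum.elim_inr,
          hdegl, hdegr]
        rw [hdc (Sum.inl i) _ inferInstance, hdc (Sum.inr j) _ inferInstance, hdegl, hdegr]
        by_cases hi : i = a <;> by_cases hj : j = b <;>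
          simp only [hi, hj, eq_self_iff_true, if_true, if_false, ite_true, ite_false,
            and_true, true_and, and_false, false_and, not_true, not_false_iff, not_and,
            not_false_eq_true, not_true_eq_false, mul_zero, zero_mul, add_zero, sub_zero,
            zero_sub, zero_add, neg_zero, sub_self] <;>
          first
            | exact hsp _ _ hrn1.le
            | exact hsp _ _ hrn0.le
            | exact hsp _ _ hrm1.le
            | exact hsp _ _ hrm0.le
    | inr j =>
      cases w' with
      | inl i =>
        simp only [SimpleGraph.randicMatrix, Matrix.of_apply, hadj4, Matrix.sub_apply,
          Matrix.add_apply, Matrix.vecMulVec_apply, hx, hy, hu, hv, Sum.elim_inl, Sum.elim_inr,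
          hdegl, hdegr]
        rw [hdc (Sum.inl i) _ inferInstance, hdc (Sum.inr j) _ inferInstance, hdegl, hdegr]
        by_cases hi : i = a <;> by_cases hj : j = b <;>
          simp only [hi, hj, eq_self_iff_true, if_true, if_false, ite_true, ite_false,
            and_true, true_and, and_false, false_and, not_true, not_false_iff, not_and,
            not_false_eq_true, not_true_eq_false, mul_zero, zero_mul, add_zero, sub_zero,
            zero_sub, zero_add, neg_zero, sub_self] <;>
          first
            | exact hsp _ _ hrn1.le
            | exact hsp _ _ hrn0.le
            | exact hsp _ _ hrm1.le
            | exact hsp _ _ hrm0.le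
      | inr j' =>
        simp [SimpleGraph.randicMatrix, hadj3, Matrix.vecMulVec_apply, hx, hy, hu, hv]
  -- dot products
  have hxx : x ⬝ᵥ x = X2 := by
    have h1 : ∀ i : Fin m, x (Sum.inl i) * x (Sum.inl i) = if i = a then P2 else rn⁻¹ := by
      intro i
      simp only [hx, Sum.elim_inl]
      split
      · exact hinvn1
      · exact hinvn
    rw [dotProduct, Fintype.sum_sum_type]
    rw [Finset.sum_congr rfl fun i _ => h1 i, sum_ite_fin a P2 rn⁻¹]
    simp only [hx, Sum.elim_inr, mul_zero, Finset.sum_const_zero, add_zero]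
    rw [hX2, hrm]
  have hyy : y ⬝ᵥ y = Y2 := by
    have h1 : ∀ j : Fin n, y (Sum.inr j) * y (Sum.inr j) = if j = b then Q2 else rm⁻¹ := by
      intro j
      simp only [hy, Sum.elim_inr]
      split
      · exact hinvm1
      · exact hinvm
    rw [dotProduct, Fintype.sum_sum_type]
    rw [Finset.sum_congr rfl fun j _ => h1 j, sum_ite_fin b Q2 rm⁻¹]
    simp only [hy, Sum.elim_inl, zero_mul, Finset.sum_const_zero, zero_add]
    rw [hY2, hrn]
  have hxu : x ⬝ᵥ u = P2 := by
    have h1 : ∀ i : Fin m, x (Sum.inl i) * u (Sum.inl i) = if i = a then P2 else 0 := by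
      intro i
      simp only [hx, hu, Sum.elim_inl]
      split
      · exact hinvn1
      · exact mul_zero _
    rw [dotProduct, Fintype.sum_sum_type]
    rw [Finset.sum_congr rfl fun i _ => h1 i, Finset.sum_ite_eq' Finset.univ a fun _ => P2]
    simp [hx, hu]
  have huu : u ⬝ᵥ u = P2 := by
    have h1 : ∀ i : Fin m, u (Sum.inl i) * u (Sum.inl i) = if i = a then P2 else 0 := by
      intro i
      simp only [hu, Sum.elim_inl]
      split
      · exact hinvn1
      · exact mul_zero _
    rw [dotProduct, Fintype.sum_sum_type]
    rw [Finset.sum_congr rfl fun i _ => h1 i, Finset.sum_ite_eq' Finset.univ a fun _ => P2]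
    simp [hu]
  have hyv : y ⬝ᵥ v = Q2 := by
    have h1 : ∀ j : Fin n, y (Sum.inr j) * v (Sum.inr j) = if j = b then Q2 else 0 := by
      intro j
      simp only [hy, hv, Sum.elim_inr]
      split
      · exact hinvm1
      · exact mul_zero _
    rw [dotProduct, Fintype.sum_sum_type]
    rw [Finset.sum_congr rfl fun j _ => h1 j, Finset.sum_ite_eq' Finset.univ b fun _ => Q2]
    simp [hy, hv]
  have hvv : v ⬝ᵥ v = Q2 := by
    have h1 : ∀ j : Fin n, v (Sum.inr j) * v (Sum.inr j) = if j = b then Q2 else 0 := by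
      intro j
      simp only [hv, Sum.elim_inr]
      split
      · exact hinvm1
      · exact mul_zero _
    rw [dotProduct, Fintype.sum_sum_type]
    rw [Finset.sum_congr rfl fun j _ => h1 j, Finset.sum_ite_eq' Finset.univ b fun _ => Q2]
    simp [hv]
  have hux : u ⬝ᵥ x = P2 := by rw [dotProduct_comm]; exact hxu
  have hvy : v ⬝ᵥ y = Q2 := by rw [dotProduct_comm]; exact hyv
  have hxy : x ⬝ᵥ y = 0 := by simp [dotProduct, Fintype.sum_sum_type, hx, hy]
  have hyx : y ⬝ᵥ x = 0 := by rw [dotProduct_comm]; exact hxy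
  have hxv : x ⬝ᵥ v = 0 := by simp [dotProduct, Fintype.sum_sum_type, hx, hv]
  have hvx : v ⬝ᵥ x = 0 := by rw [dotProduct_comm]; exact hxv
  have hyu : y ⬝ᵥ u = 0 := by simp [dotProduct, Fintype.sum_sum_type, hy, hu]
  have huy : u ⬝ᵥ y = 0 := by rw [dotProduct_comm]; exact hyu
  have huv : u ⬝ᵥ v = 0 := by simp [dotProduct, Fintype.sum_sum_type, hu, hv]
  have hvu : v ⬝ᵥ u = 0 := by rw [dotProduct_comm]; exact huv
  -- the matrix E
  set E : Matrix (Fin m ⊕ Fin n) (Fin m ⊕ Fin n) ℝ :=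
    vecMulVec x y + vecMulVec y x - vecMulVec u v - vecMulVec v u with hE
  -- scalar constants
  obtain ⟨c2, hc2⟩ : ∃ c : ℝ, c = P2*Q2 - P2*Y2 := ⟨_, rfl⟩
  obtain ⟨c3, hc3⟩ : ∃ c : ℝ, c = P2*Q2 - Q2*X2 := ⟨_, rfl⟩
  have hc1 : X2 * Y2 - P2 * Q2 = 1 + s2 := by
    rw [hX2, hY2, hP2, hQ2, hs2]
    field_simp
    ring
  have hc23 : c2 * c3 = s2 := by
    rw [hc2, hc3, hX2, hY2, hP2, hQ2, hs2]
    field_simp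
    ring
  have hE2 : E * E
      = Y2 • vecMulVec x x + X2 • vecMulVec y y
        - Q2 • vecMulVec x u - Q2 • vecMulVec u x
        - P2 • vecMulVec y v - P2 • vecMulVec v y
        + Q2 • vecMulVec u u + P2 • vecMulVec v v := by
    rw [hE]
    simp only [sub_mul, mul_sub, add_mul, mul_add, vmv_mul, hxx, hxy, hxu, hxv, hyx, hyy, hyu,
      hyv, hux, huy, huu, huv, hvx, hvy, hvu, hvv]
    module
  have hE3 : (E * E) * E
      = (1 + s2) • (vecMulVec x y + vecMulVec y x)
        + c2 • (vecMulVec x v + vecMulVec v x)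
        + c3 • (vecMulVec y u + vecMulVec u y) := by
    rw [hE2, hE]
    simp only [sub_mul, mul_sub, add_mul, mul_add, smul_mul_assoc, mul_smul_comm, vmv_mul,
      hxx, hxy, hxu, hxv, hyx, hyy, hyu, hyv, hux, huy, huu, huv, hvx, hvy, hvu, hvv,
      smul_smul]
    match_scalars <;>
      first
        | ring1
        | linear_combination hc1
        | linear_combination -hc1
        | linear_combination hc2
        | linear_combination -hc2
        | linear_combination hc3
        | linear_combination -hc3
  -- row functional products
  have hmulxy : vecMulVec x y * (E * E) = (1+s2) • vecMulVec x y + c2 • vecMulVec x v := by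
    rw [hE2]
    simp only [mul_sub, mul_add, mul_smul_comm, vmv_mul, hxx, hxy, hxu, hxv, hyx, hyy, hyu,
      hyv, hux, huy, huu, huv, hvx, hvy, hvu, hvv, smul_smul]
    match_scalars <;>
      first
        | ring1
        | linear_combination hc1
        | linear_combination -hc1
        | linear_combination hc2
        | linear_combination -hc2
        | linear_combination hc3
        | linear_combination -hc3
  have hmulyx : vecMulVec y x * (E * E) = (1+s2) • vecMulVec y x + c3 • vecMulVec y u := by
    rw [hE2]
    simp only [mul_sub, mul_add, mul_smul_comm, vmv_mul, hxx, hxy, hxu, hxv, hyx, hyy, hyu,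
      hyv, hux, huy, huu, huv, hvx, hvy, hvu, hvv, smul_smul]
    match_scalars <;>
      first
        | ring1
        | linear_combination hc1
        | linear_combination -hc1
        | linear_combination hc2
        | linear_combination -hc2
        | linear_combination hc3
        | linear_combination -hc3
  have hmulxv : vecMulVec x v * (E * E) = (-c3) • vecMulVec x y := by
    rw [hE2]
    simp only [mul_sub, mul_add, mul_smul_comm, vmv_mul, hxx, hxy, hxu, hxv, hyx, hyy, hyu,
      hyv, hux, huy, huu, huv, hvx, hvy, hvu, hvv, smul_smul]
    match_scalars <;>
      first
        | ring1
        | linear_combination hc1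
        | linear_combination -hc1
        | linear_combination hc2
        | linear_combination -hc2
        | linear_combination hc3
        | linear_combination -hc3
  have hmulvx : vecMulVec v x * (E * E) = (1+s2) • vecMulVec v x + c3 • vecMulVec v u := by
    rw [hE2]
    simp only [mul_sub, mul_add, mul_smul_comm, vmv_mul, hxx, hxy, hxu, hxv, hyx, hyy, hyu,
      hyv, hux, huy, huu, huv, hvx, hvy, hvu, hvv, smul_smul]
    match_scalars <;>
      first
        | ring1
        | linear_combination hc1
        | linear_combination -hc1
        | linear_combination hc2
        | linear_combination -hc2
        | linear_combination hc3
        | linear_combination -hc3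
  have hmulyu : vecMulVec y u * (E * E) = (-c2) • vecMulVec y x := by
    rw [hE2]
    simp only [mul_sub, mul_add, mul_smul_comm, vmv_mul, hxx, hxy, hxu, hxv, hyx, hyy, hyu,
      hyv, hux, huy, huu, huv, hvx, hvy, hvu, hvv, smul_smul]
    match_scalars <;>
      first
        | ring1
        | linear_combination hc1
        | linear_combination -hc1
        | linear_combination hc2
        | linear_combination -hc2
        | linear_combination hc3
        | linear_combination -hc3
  have hmuluy : vecMulVec u y * (E * E) = (1+s2) • vecMulVec u y + c2 • vecMulVec u v := by
    rw [hE2]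
    simp only [mul_sub, mul_add, mul_smul_comm, vmv_mul, hxx, hxy, hxu, hxv, hyx, hyy, hyu,
      hyv, hux, huy, huu, huv, hvx, hvy, hvu, hvv, smul_smul]
    match_scalars <;>
      first
        | ring1
        | linear_combination hc1
        | linear_combination -hc1
        | linear_combination hc2
        | linear_combination -hc2
        | linear_combination hc3
        | linear_combination -hc3
  have hmuluv : vecMulVec u v * (E * E) = (-c3) • vecMulVec u y := by
    rw [hE2]
    simp only [mul_sub, mul_add, mul_smul_comm, vmv_mul, hxx, hxy, hxu, hxv, hyx, hyy, hyu,
      hyv, hux, huy, huu, huv, hvx, hvy, hvu, hvv, smul_smul]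
    match_scalars <;>
      first
        | ring1
        | linear_combination hc1
        | linear_combination -hc1
        | linear_combination hc2
        | linear_combination -hc2
        | linear_combination hc3
        | linear_combination -hc3
  have hmulvu : vecMulVec v u * (E * E) = (-c2) • vecMulVec v x := by
    rw [hE2]
    simp only [mul_sub, mul_add, mul_smul_comm, vmv_mul, hxx, hxy, hxu, hxv, hyx, hyy, hyu,
      hyv, hux, huy, huu, huv, hvx, hvy, hvu, hvv, smul_smul]
    match_scalars <;>
      first
        | ring1
        | linear_combination hc1
        | linear_combination -hc1
        | linear_combination hc2
        | linear_combination -hc2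
        | linear_combination hc3
        | linear_combination -hc3
  -- A = R^3 - R as a small linear combination
  have hA : (E * E) * E - E
      = s2 • (vecMulVec x y + vecMulVec y x)
        + c2 • (vecMulVec x v + vecMulVec v x)
        + c3 • (vecMulVec y u + vecMulVec u y)
        + (vecMulVec u v + vecMulVec v u) := by
    rw [hE3, hE]
    module
  -- the annihilating identity
  have hAnn : ((E * E) * E - E) * (E * E) = s2 • ((E * E) * E - E) := by
    rw [hA]
    simp only [add_mul, smul_mul_assoc, hmulxy, hmulyx, hmulxv, hmulvx, hmulyu, hmuluy,
      hmuluv, hmulvu]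
    match_scalars <;>
      first
        | ring1
        | linear_combination hc23
        | linear_combination -hc23
  -- traces
  have htrE2 : (E * E).trace = 2 + 2 * s2 := by
    rw [hE2]
    simp only [Matrix.trace_add, Matrix.trace_sub, Matrix.trace_smul, trace_vmv,
      hxx, hyy, hxu, hux, hyv, hvy, huu, hvv, smul_eq_mul]
    linear_combination 2 * hc1
  have htrE4 : ((E * E) * (E * E)).trace = 2 + 2 * (s2 * s2) := by
    rw [← mul_assoc, hE3, hE]
    simp only [add_mul, mul_add, mul_sub, smul_mul_assoc, vmv_mul, hxx, hxy, hxu, hxv, hyx,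
      hyy, hyu, hyv, hux, huy, huu, huv, hvx, hvy, hvu, hvv, smul_smul]
    simp only [Matrix.trace_add, Matrix.trace_sub, Matrix.trace_smul, trace_vmv,
      hxx, hyy, hxu, hux, hyv, hvy, huu, hvv, hxy, hyx, hxv, hvx, hyu, huy, huv, hvu,
      smul_eq_mul]
    linear_combination 2*(1+s2)*hc1 + 2*c2*hc3 + 2*c3*hc2 - 4*hc23
  -- Hermitian
  have hermE : E.IsHermitian := by
    unfold Matrix.IsHermitian
    rw [hE]
    simp only [Matrix.conjTranspose_sub, Matrix.conjTranspose_add, vmv_ct]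
    abel
  have hherm : G.randicMatrix.IsHermitian := by rw [hRmat]; exact hermE
  rw [← hRmat] at hAnn htrE2 htrE4
  -- spectral theory
  rw [SimpleGraph.randicEnergy, matrixEnergy, dif_pos hherm]
  set μ : (Fin m ⊕ Fin n) → ℝ := hherm.eigenvalues with hμ
  set U : Matrix (Fin m ⊕ Fin n) (Fin m ⊕ Fin n) ℝ :=
    (Matrix.IsHermitian.eigenvectorUnitary hherm : Matrix (Fin m ⊕ Fin n) (Fin m ⊕ Fin n) ℝ)
    with hU
  have hU1 : star U * U = 1 :=
    Matrix.mem_unitaryGroup_iff'.mp (Matrix.IsHermitian.eigenvectorUnitary hherm).2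
  have hU2 : U * star U = 1 :=
    Matrix.mem_unitaryGroup_iff.mp (Matrix.IsHermitian.eigenvectorUnitary hherm).2
  have hDdiag : star U * G.randicMatrix * U = Matrix.diagonal μ := by
    have := Matrix.IsHermitian.conjStarAlgAut_star_eigenvectorUnitary hherm
    rw [Unitary.conjStarAlgAut_apply] at this
    simp only [Unitary.coe_star, star_star, Function.comp_def, RCLike.ofReal_real_eq_id, id] at this
    rw [hU]
    convert this using 2
  set R : Matrix (Fin m ⊕ Fin n) (Fin m ⊕ Fin n) ℝ := G.randicMatrix with hRdef
  set D : Matrix (Fin m ⊕ Fin n) (Fin m ⊕ Fin n) ℝ := Matrix.diagonal μ with hD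
  have hkey : ∀ B C : Matrix (Fin m ⊕ Fin n) (Fin m ⊕ Fin n) ℝ,
      (star U * B * U) * (star U * C * U) = star U * (B * C) * U := by
    intro B C
    calc (star U * B * U) * (star U * C * U)
        = star U * B * (U * star U) * C * U := by
          simp only [Matrix.mul_assoc]
      _ = star U * (B * C) * U := by
          rw [hU2]
          simp only [Matrix.mul_one, Matrix.mul_assoc]
  have hD2 : D * D = star U * (R * R) * U := by rw [← hDdiag]; exact hkey R R
  have hD3 : (D * D) * D = star U * ((R * R) * R) * U := by
    rw [hD2, ← hDdiag]; exact hkey (R*R) R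
  have hDsub : (D * D) * D - D = star U * ((R * R) * R - R) * U := by
    rw [hD3, ← hDdiag, Matrix.mul_sub, Matrix.sub_mul]
  have hDann : ((D * D) * D - D) * (D * D) = s2 • ((D * D) * D - D) := by
    rw [hDsub, hD2, hkey, hAnn]
    rw [Matrix.mul_smul, Matrix.smul_mul]
  have hDdiag2 : D * D = Matrix.diagonal (fun i => μ i * μ i) := by
    rw [hD, Matrix.diagonal_mul_diagonal]
  have hDdiag3 : (D * D) * D - D = Matrix.diagonal (fun i => μ i * μ i * μ i - μ i) := by
    rw [hDdiag2, hD, Matrix.diagonal_mul_diagonal, Matrix.diagonal_sub]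
  have hscalar : ∀ i, (μ i * μ i * μ i - μ i) * (μ i * μ i) = s2 * (μ i * μ i * μ i - μ i) := by
    intro i
    have h6 := hDann
    rw [hDdiag3, hDdiag2, Matrix.diagonal_mul_diagonal] at h6
    have h7 := congrFun (congrFun h6 i) i
    simpa using h7
  -- trace identities for eigenvalues
  have htrD2 : ∑ i, μ i ^ 2 = 2 + 2 * s2 := by
    have e1 : (D * D).trace = (R * R).trace := by
      rw [hD2, Matrix.trace_mul_cycle, hU2, Matrix.one_mul]
    rw [hDdiag2, Matrix.trace_diagonal, htrE2] at e1
    rw [← e1]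
    exact Finset.sum_congr rfl fun i _ => by ring
  have htrD4 : ∑ i, μ i ^ 4 = 2 + 2 * (s2 * s2) := by
    have e0 : (D * D) * (D * D) = star U * ((R * R) * (R * R)) * U := by
      rw [hD2]; exact hkey _ _
    have e1 : ((D * D) * (D * D)).trace = ((R * R) * (R * R)).trace := by
      rw [e0, Matrix.trace_mul_cycle, hU2, Matrix.one_mul]
    rw [hDdiag2, Matrix.diagonal_mul_diagonal, Matrix.trace_diagonal, htrE4] at e1
    rw [← e1]
    exact Finset.sum_congr rfl fun i _ => by ring
  -- the value of s
  set s : ℝ := (Real.sqrt (rm * rn))⁻¹ with hsdef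
  have hmn0 : (0:ℝ) < rm * rn := by positivity
  have hs_pos : 0 < s := by rw [hsdef]; positivity
  have hs_sq : s ^ 2 = s2 := by
    rw [hsdef, hs2, sq, ← mul_inv, Real.mul_self_sqrt hmn0.le]
  have hs0 : s ≠ 0 := hs_pos.ne'
  have hs1 : s + 1 ≠ 0 := by positivity
  -- pointwise absolute values
  obtain ⟨aa, haa⟩ : ∃ c : ℝ, c = 1 + (s*(s+1))⁻¹ := ⟨_, rfl⟩
  obtain ⟨bb, hbb⟩ : ∃ c : ℝ, c = -(s*(s+1))⁻¹ := ⟨_, rfl⟩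
  have key : ∀ i, |μ i| = aa * μ i ^ 2 + bb * μ i ^ 4 := by
    intro i
    have h0 : μ i * ((μ i ^ 2 - 1) * (μ i ^ 2 - s2)) = 0 := by
      linear_combination hscalar i
    rcases mul_eq_zero.mp h0 with h | h
    · rw [h]; simp
    rcases mul_eq_zero.mp h with h1 | h1
    · have h2 : (μ i - 1) * (μ i + 1) = 0 := by linear_combination h1
      rcases mul_eq_zero.mp h2 with h3 | h3
      · have : μ i = 1 := by linarith
        rw [this, haa, hbb]
        norm_num
      · have : μ i = -1 := by linarith
        rw [this, haa, hbb]
        norm_num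
    · have h2 : (μ i - s) * (μ i + s) = 0 := by linear_combination h1 - hs_sq
      rcases mul_eq_zero.mp h2 with h3 | h3
      · have hmu : μ i = s := by linarith
        rw [hmu, abs_of_pos hs_pos, haa, hbb]
        field_simp
        ring
      · have hmu : μ i = -s := by linarith
        rw [hmu, abs_neg, abs_of_pos hs_pos, haa, hbb]
        field_simp
        ring
  calc ∑ i, |μ i| = ∑ i, (aa * μ i ^ 2 + bb * μ i ^ 4) :=
        Finset.sum_congr rfl fun i _ => key i
    _ = aa * (∑ i, μ i ^ 2) + bb * (∑ i, μ i ^ 4) := by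
        rw [Finset.sum_add_distrib, Finset.mul_sum, Finset.mul_sum]
    _ = aa * (2 + 2 * s2) + bb * (2 + 2 * (s2 * s2)) := by rw [htrD2, htrD4]
    _ = 2 + 2 * s := by
        rw [haa, hbb, ← hs_sq]
        field_simp
        ring
end
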